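/- Let k ≥ 1 and n ≥ 1 be integers and let p be a prime. Then ν_p((n-1)^(k̲)/(k+1)) ≥ -1, and if (k+1) ∤ n then ν_p((n-1)^(k̲)/(k+1)) ≥ 0. -/

import Mathlib

lemma dvd_descFactorial_of_le (q k N : ℕ) (h : 0 < q) (hq : q ≤ k) : q ∣ N.descFactorial k := by
  rw [Nat.descFactorial_eq_prod_range]
  have hmem : N % q ∈ Finset.range k := Finset.mem_range.mpr (lt_of_lt_of_le (Nat.mod_lt _ h) hq)
  have hdvd : q ∣ N - N % q := by
    have h1 := Nat.mod_add_div N q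
    have : N - N % q = q * (N / q) := by omega
    rw [this]; exact Dvd.intro _ rfl
  exact hdvd.trans (Finset.dvd_prod_of_mem _ hmem)

lemma dvd_descFactorial_of_not_dvd (q k n : ℕ) (hq0 : 0 < q) (hq : q ≤ k + 1) (hn : 1 ≤ n)
    (hnd : ¬ q ∣ n) : q ∣ (n - 1).descFactorial k := by
  rw [Nat.descFactorial_eq_prod_range]
  have hr : 1 ≤ n % q := by
    rcases Nat.eq_zero_or_pos (n % q) with h | h
    · exact absurd (Nat.dvd_of_mod_eq_zero h) hnd
    · exact h
  have hmem : n % q - 1 ∈ Finset.range k := Finset.mem_range.mpr (by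
    have := Nat.mod_lt n hq0; omega)
  have hdvd : q ∣ (n - 1) - (n % q - 1) := by
    have h1 := Nat.mod_add_div n q
    have : (n - 1) - (n % q - 1) = q * (n / q) := by omega
    rw [this]; exact Dvd.intro _ rfl
  exact hdvd.trans (Finset.dvd_prod_of_mem _ hmem)

/-- Corollary. Let `k ≥ 1`, `n ≥ 1` and let `p` be a prime. Then
`ν_p((n-1)^(k̲)/(k+1)) ≥ -1`, and if `(k+1) ∤ n` then
`ν_p((n-1)^(k̲)/(k+1)) ≥ 0`.  The valuation on rationals is `padicValRat`.
(When `(n-1)^(k̲) = 0` the conventions `ν_p(0) = ∞` and `padicValRat p 0 = 0`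
both make the inequalities hold.) -/
theorem padicValRat_descFactorial_div_ge
    (k n : ℕ) (hk : 1 ≤ k) (hn : 1 ≤ n) (p : ℕ) (hp : Nat.Prime p) :
    -1 ≤ padicValRat p (((n - 1).descFactorial k : ℚ) / (k + 1)) ∧
      (¬ ((k + 1) ∣ n) → 0 ≤ padicValRat p (((n - 1).descFactorial k : ℚ) / (k + 1))) := by
  haveI : Fact p.Prime := ⟨hp⟩
  set D : ℕ := (n - 1).descFactorial k with hD
  rcases Nat.eq_zero_or_pos D with h0 | h0
  · rw [h0]
    norm_num [padicValRat.zero]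
  · have hDQ : (D : ℚ) ≠ 0 := Nat.cast_ne_zero.mpr h0.ne'
    have hkQ : ((k : ℚ) + 1) ≠ 0 := by positivity
    have hkk : ((k + 1 : ℕ) : ℚ) = (k : ℚ) + 1 := by push_cast; ring
    have hval : padicValRat p ((D : ℚ) / ((k : ℚ) + 1)) =
        (padicValNat p D : ℤ) - (padicValNat p (k + 1) : ℤ) := by
      rw [padicValRat.div hDQ hkQ, ← hkk, padicValRat.of_nat, padicValRat.of_nat]
    set a : ℕ := padicValNat p (k + 1) with ha
    have hpa : p ^ a ∣ k + 1 := pow_padicValNat_dvd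
    have hpale : p ^ a ≤ k + 1 := Nat.le_of_dvd (by omega) hpa
    constructor
    · rw [hval]
      have : a - 1 ≤ padicValNat p D := by
        rcases Nat.eq_zero_or_pos a with h | h
        · omega
        · have h2 : 2 * p ^ (a - 1) ≤ p ^ a := by
            calc 2 * p ^ (a - 1) ≤ p * p ^ (a - 1) :=
                  Nat.mul_le_mul_right _ hp.two_le
              _ = p ^ a := by rw [← pow_succ']; congr 1; omega
          have hle : p ^ (a - 1) ≤ k := by omega
          have := (padicValNat_dvd_iff_le h0.ne').mp
            (dvd_descFactorial_of_le (p ^ (a - 1)) k (n - 1) (Nat.pow_pos hp.pos) hle)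
          omega
      omega
    · intro hnd
      rw [hval]
      have : a ≤ padicValNat p D := by
        apply (padicValNat_dvd_iff_le h0.ne').mp
        rcases Nat.lt_or_ge (p ^ a) (k + 1) with h | h
        · exact dvd_descFactorial_of_le _ _ _ (Nat.pow_pos hp.pos) (by omega)
        · have heq : p ^ a = k + 1 := by omega
          exact dvd_descFactorial_of_not_dvd _ _ _ (Nat.pow_pos hp.pos) hpale hn (by rw [heq]; exact hnd)
      omega
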